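/- Let X be a metric space, μ a measure over X, A ⊆ X nonempty, and ζ: 𝒮 → [0,+∞] a gauge. Assume that (1) μ is a regular measure, (2) every element of 𝒮_{μ,ζ} is closed and μ-measurable, and (3) 𝒮_{μ,ζ} covers A finely. If μ({x ∈ A : F^ζ(μ,x) = +∞}) = 0, then μ⌊A is absolutely continuous with respect to ψ_ζ⌊A (no countable covering of A by open sets of finite μ-measure is required for this implication). -/

import Mathlib

open MeasureTheory Set ENNReal Filter

noncomputable section

/-- The subclass `𝒮_{μ,ζ}` of a class of sets `𝒮`, obtained by removing the sets `S`
where `ζ S = μ S = 0` or `ζ S = μ S = +∞`. -/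
def goodClass {X : Type*} [MetricSpace X] (μ : OuterMeasure X) (𝒮 : Set (Set X))
    (ζ : Set X → ℝ≥0∞) : Set (Set X) :=
  {S ∈ 𝒮 | ¬ ((ζ S = 0 ∧ μ S = 0) ∨ (ζ S = ⊤ ∧ μ S = ⊤))}

/-- The quotient function `Q_{μ,ζ}`: equals `+∞` if `ζ S = 0`, `μ S / ζ S` if
`0 < ζ S < +∞`, and `0` if `ζ S = +∞` (note `a / ⊤ = 0` in `ℝ≥0∞`). -/
def fedQuot {X : Type*} [MetricSpace X] (μ : OuterMeasure X) (ζ : Set X → ℝ≥0∞)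
    (S : Set X) : ℝ≥0∞ :=
  if ζ S = 0 then ⊤ else μ S / ζ S

/-- A family of sets `ℱ` covers `A` finely: for every `a ∈ A` and every `ε > 0` there is
`S ∈ ℱ` containing `a` with `diam S < ε`. -/
def CoversFinely {X : Type*} [MetricSpace X] (ℱ : Set (Set X)) (A : Set X) : Prop :=
  ∀ a ∈ A, ∀ ε : ℝ≥0∞, 0 < ε → ∃ S ∈ ℱ, a ∈ S ∧ EMetric.diam S < ε

/-- The Federer density `F^ζ(μ,x)`. -/
def federerDensity {X : Type*} [MetricSpace X] (μ : OuterMeasure X) (𝒮 : Set (Set X))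
    (ζ : Set X → ℝ≥0∞) (x : X) : ℝ≥0∞ :=
  ⨅ (ε : ℝ≥0∞) (_ : 0 < ε),
    ⨆ (S : Set X) (_ : S ∈ goodClass μ 𝒮 ζ) (_ : x ∈ S) (_ : EMetric.diam S < ε),
      fedQuot μ ζ S

/-- The size-`δ` premeasure `φ_{ζ,δ}` of the Carathéodory construction. -/
def preCarMeasure {X : Type*} [MetricSpace X] (𝒮 : Set (Set X)) (ζ : Set X → ℝ≥0∞)
    (δ : ℝ≥0∞) (R : Set X) : ℝ≥0∞ :=
  ⨅ (E : ℕ → Set X) (_ : ∀ j, E j ∈ 𝒮) (_ : ∀ j, EMetric.diam (E j) ≤ δ)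
    (_ : R ⊆ ⋃ j, E j), ∑' j, ζ (E j)

/-- The Carathéodory measure `ψ_ζ`. -/
def carMeasure {X : Type*} [MetricSpace X] (𝒮 : Set (Set X)) (ζ : Set X → ℝ≥0∞)
    (R : Set X) : ℝ≥0∞ :=
  ⨆ (δ : ℝ≥0∞) (_ : 0 < δ), preCarMeasure 𝒮 ζ δ R

/-- The `τ`-enlargement `Ŝ` of a set `S`. -/
def enlargement {X : Type*} [MetricSpace X] (μ : OuterMeasure X) (𝒮 : Set (Set X))
    (ζ : Set X → ℝ≥0∞) (τ : ℝ) (S : Set X) : Set X :=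
  ⋃₀ {T ∈ goodClass μ 𝒮 ζ | (T ∩ S).Nonempty ∧
      EMetric.diam T ≤ ENNReal.ofReal τ * EMetric.diam S}

/-- `μ` is a regular (outer) measure: every set is contained in a `μ`-measurable set of
the same measure. -/
def IsRegularOM {X : Type*} [MetricSpace X] (μ : OuterMeasure X) : Prop :=
  ∀ E : Set X, ∃ F : Set X, E ⊆ F ∧ μ.IsCaratheodory F ∧ μ F = μ E

/-- `μ` is a Borel (outer) measure: every Borel set is `μ`-measurable. -/
def IsBorelOM {X : Type*} [MetricSpace X] (μ : OuterMeasure X) : Prop :=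
  ∀ E : Set X, MeasurableSet[borel X] E → μ.IsCaratheodory E

/-- `μ` is a Borel regular (outer) measure. -/
def IsBorelRegularOM {X : Type*} [MetricSpace X] (μ : OuterMeasure X) : Prop :=
  IsBorelOM μ ∧ ∀ E : Set X, ∃ B : Set X, E ⊆ B ∧ MeasurableSet[borel X] B ∧ μ B = μ E

/-- Carathéodory measurability of a set with respect to a set function. -/
def SetFnCaratheodory {X : Type*} (ν : Set X → ℝ≥0∞) (E : Set X) : Prop :=
  ∀ T : Set X, ν T = ν (T ∩ E) + ν (T \ E)

/-- `μ⌊A << ν⌊A`: absolute continuity of the restrictions to `A`. -/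
def AbsContOn {X : Type*} [MetricSpace X] (μ : OuterMeasure X) (ν : Set X → ℝ≥0∞)
    (A : Set X) : Prop :=
  ∀ E : Set X, ν (A ∩ E) = 0 → μ (A ∩ E) = 0

/-- `S` is σ-finite with respect to the set function `ν`. -/
def SigmaFiniteWrt {X : Type*} (ν : Set X → ℝ≥0∞) (S : Set X) : Prop :=
  ∃ E : ℕ → Set X, S ⊆ ⋃ j, E j ∧ ∀ j, ν (E j) < ⊤

/-- The integral `∫_B f dν` with respect to an (outer) set function `ν`,
via the layer-cake formula. -/
def omIntegral {X : Type*} (ν : Set X → ℝ≥0∞) (B : Set X) (f : X → ℝ≥0∞) : ℝ≥0∞ :=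
  ∫⁻ t in Set.Ioi (0 : ℝ), ν {x ∈ B | ENNReal.ofReal t < f x}

/-- The enlargement condition: there are `c ≥ 1` and `η > 0` such that every
`S ∈ 𝒮_{μ,ζ}` admits `S̃ ∈ 𝒮` with `Ŝ ⊆ S̃`, `diam S̃ ≤ c diam S` and `ζ S̃ ≤ η ζ S`. -/
def EnlCondition {X : Type*} [MetricSpace X] (μ : OuterMeasure X) (𝒮 : Set (Set X))
    (ζ : Set X → ℝ≥0∞) (τ : ℝ) : Prop :=
  ∃ c : ℝ, 1 ≤ c ∧ ∃ η : ℝ, 0 < η ∧ ∀ S ∈ goodClass μ 𝒮 ζ, ∃ S' ∈ 𝒮,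
    enlargement μ 𝒮 ζ τ S ⊆ S' ∧ EMetric.diam S' ≤ ENNReal.ofReal c * EMetric.diam S ∧
      ζ S' ≤ ENNReal.ofReal η * ζ S

/-- The gauge `ζ_α(S) = c_α (diam S)^α`. -/
def zetaDiam {X : Type*} [MetricSpace X] (cα α : ℝ) (S : Set X) : ℝ≥0∞ :=
  ENNReal.ofReal cα * EMetric.diam S ^ α

/-- The family `ℱ` of closed subsets of `X`. -/
def closedSets (X : Type*) [MetricSpace X] : Set (Set X) := {S | IsClosed S}

/-- The family `ℱ_b` of closed balls of `X` (with positive radius). -/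
def closedBalls (X : Type*) [MetricSpace X] : Set (Set X) :=
  {S | ∃ (y : X) (r : ℝ), 0 < r ∧ S = Metric.closedBall y r}

/-- The family `ℱ_o` of open balls of `X` (with positive radius). -/
def openBalls (X : Type*) [MetricSpace X] : Set (Set X) :=
  {S | ∃ (y : X) (r : ℝ), 0 < r ∧ S = Metric.ball y r}

/-- The `α`-dimensional Hausdorff measure `ℋ^α` with normalizing constant `c_α`. -/
def hausdorffMeasureC (X : Type*) [MetricSpace X] (cα α : ℝ) : Set X → ℝ≥0∞ :=
  carMeasure (closedSets X) (zetaDiam cα α)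

/-- The `α`-dimensional spherical Hausdorff measure `𝒮^α` with constant `c_α`. -/
def sphericalMeasureC (X : Type*) [MetricSpace X] (cα α : ℝ) : Set X → ℝ≥0∞ :=
  carMeasure (closedBalls X) (zetaDiam cα α)

/-- `X` is diametrically regular. -/
def DiametricallyRegular (X : Type*) [MetricSpace X] : Prop :=
  ∀ x : X, ∃ R > (0 : ℝ), ∃ δ > (0 : ℝ), ∀ y ∈ Metric.ball x R,
    ContinuousOn (fun r : ℝ => EMetric.diam (Metric.ball y r)) (Set.Ioo 0 δ)

end

/-- the absolute continuity follows from the vanishing condition, with no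
countable covering by open sets of finite measure. -/
theorem stmt3 {X : Type*} [MetricSpace X] (μ : MeasureTheory.OuterMeasure X)
    (𝒮 : Set (Set X)) (ζ : Set X → ℝ≥0∞) (A : Set X) (hA : A.Nonempty)
    (h1 : IsRegularOM μ)
    (h2 : ∀ S ∈ goodClass μ 𝒮 ζ, IsClosed S ∧ μ.IsCaratheodory S)
    (h3 : CoversFinely (goodClass μ 𝒮 ζ) A)
    (h : μ {x ∈ A | federerDensity μ 𝒮 ζ x = ⊤} = 0) :
    AbsContOn μ (carMeasure 𝒮 ζ) A := by
  intro E hE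
  classical
  set B := A ∩ E with hB
  -- all premeasures of B vanish
  have hpre : ∀ δ : ℝ≥0∞, 0 < δ → preCarMeasure 𝒮 ζ δ B = 0 := by
    intro δ hδ
    have h1' : preCarMeasure 𝒮 ζ δ B ≤ carMeasure 𝒮 ζ B :=
      le_iSup₂ (f := fun δ (_ : 0 < δ) => preCarMeasure 𝒮 ζ δ B) δ hδ
    rw [hE] at h1'
    exact le_antisymm h1' zero_le
  set C : ℕ → ℕ → Set X := fun n m =>
    {x ∈ B | ∀ S ∈ goodClass μ 𝒮 ζ, x ∈ S →
      EMetric.diam S < ((n : ℝ≥0∞) + 1)⁻¹ → fedQuot μ ζ S ≤ (m : ℝ≥0∞)} with hC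
  have hCnull : ∀ n m : ℕ, μ (C n m) = 0 := by
    intro n m
    have key : ∀ c : ℝ≥0∞, 0 < c → μ (C n m) ≤ ((m : ℝ≥0∞) + 1) * c := by
      intro c hc
      -- extract a cover of small total gauge, with small diameters
      have hδpos : (0 : ℝ≥0∞) < ((n : ℝ≥0∞) + 2)⁻¹ :=
        ENNReal.inv_pos.mpr (by simp)
      have hlt : preCarMeasure 𝒮 ζ ((n : ℝ≥0∞) + 2)⁻¹ B < c := by
        rw [hpre _ hδpos]; exact hc
      rw [preCarMeasure] at hlt
      simp only [iInf_lt_iff] at hlt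
      obtain ⟨F, hF𝒮, hFdiam, hFcov, hFsum⟩ := hlt
      -- each F j meeting C n m satisfies μ (F j) ≤ (m+1) ζ (F j)
      have key2 : ∀ j, (F j ∩ C n m).Nonempty → μ (F j) ≤ ((m : ℝ≥0∞) + 1) * ζ (F j) := by
        intro j ⟨x, hxF, hxC⟩
        by_cases hg : F j ∈ goodClass μ 𝒮 ζ
        · have hdlt : EMetric.diam (F j) < ((n : ℝ≥0∞) + 1)⁻¹ := by
            refine lt_of_le_of_lt (hFdiam j) ?_
            refine ENNReal.inv_lt_inv.mpr ?_
            exact ENNReal.add_lt_add_left (by simp) (by norm_num)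
          have hq : fedQuot μ ζ (F j) ≤ (m : ℝ≥0∞) := hxC.2 _ hg hxF hdlt
          rw [fedQuot] at hq
          split_ifs at hq with h0
          · exact absurd hq (by simp)
          · by_cases ht : ζ (F j) = ⊤
            · rw [ht, ENNReal.mul_top (by simp)]; exact le_top
            · calc μ (F j) ≤ (m : ℝ≥0∞) * ζ (F j) := (ENNReal.div_le_iff h0 ht).mp hq
                _ ≤ ((m : ℝ≥0∞) + 1) * ζ (F j) := mul_le_mul_left (by simp) _
        · have hcases : (ζ (F j) = 0 ∧ μ (F j) = 0) ∨ (ζ (F j) = ⊤ ∧ μ (F j) = ⊤) := by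
            by_contra hcon; exact hg ⟨hF𝒮 j, hcon⟩
          rcases hcases with ⟨_, hμ0⟩ | ⟨hζt, _⟩
          · rw [hμ0]; exact zero_le
          · rw [hζt, ENNReal.mul_top (by simp)]; exact le_top
      -- cover C n m by the relevant F j's
      set F' : ℕ → Set X := fun j => if (F j ∩ C n m).Nonempty then F j else ∅ with hF'
      have hsub : C n m ⊆ ⋃ j, F' j := by
        intro x hx
        obtain ⟨j, hj⟩ := mem_iUnion.mp (hFcov hx.1)
        refine mem_iUnion.mpr ⟨j, ?_⟩
        have hne : (F j ∩ C n m).Nonempty := ⟨x, hj, hx⟩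
        simp only [hF', if_pos hne]; exact hj
      calc μ (C n m) ≤ μ (⋃ j, F' j) := measure_mono hsub
        _ ≤ ∑' j, μ (F' j) := measure_iUnion_le F'
        _ ≤ ∑' j, ((m : ℝ≥0∞) + 1) * ζ (F j) := by
            refine ENNReal.tsum_le_tsum fun j => ?_
            by_cases hne : (F j ∩ C n m).Nonempty
            · simp only [hF', if_pos hne]; exact key2 j hne
            · simp [hF', if_neg hne]
        _ = ((m : ℝ≥0∞) + 1) * ∑' j, ζ (F j) := ENNReal.tsum_mul_left
        _ ≤ ((m : ℝ≥0∞) + 1) * c := mul_le_mul_right hFsum.le _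
    refine le_antisymm ?_ zero_le
    refine ENNReal.le_of_forall_pos_le_add fun ε hε _ => ?_
    have hεpos : (0 : ℝ≥0∞) < (ε : ℝ≥0∞) / ((m : ℝ≥0∞) + 1) :=
      ENNReal.div_pos (by exact_mod_cast hε.ne') (by simp)
    calc μ (C n m) ≤ ((m : ℝ≥0∞) + 1) * ((ε : ℝ≥0∞) / ((m : ℝ≥0∞) + 1)) := key _ hεpos
      _ ≤ (ε : ℝ≥0∞) := ENNReal.mul_div_le
      _ = 0 + ε := (zero_add _).symm
  -- B is covered by the null set of infinite density plus the C n m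
  have hcover : B ⊆ {x ∈ A | federerDensity μ 𝒮 ζ x = ⊤} ∪ ⋃ n, ⋃ m, C n m := by
    intro x hx
    by_cases hF : federerDensity μ 𝒮 ζ x = ⊤
    · exact Or.inl ⟨hx.1, hF⟩
    · right
      have hlt : federerDensity μ 𝒮 ζ x < ⊤ := lt_top_iff_ne_top.mpr hF
      rw [federerDensity] at hlt
      simp only [iInf_lt_iff] at hlt
      obtain ⟨ε, hε, hsup⟩ := hlt
      obtain ⟨m, hm⟩ := ENNReal.exists_nat_gt hsup.ne
      obtain ⟨n, hn⟩ := ENNReal.exists_inv_nat_lt hε.ne'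
      refine mem_iUnion.mpr ⟨n, mem_iUnion.mpr ⟨m, hx, ?_⟩⟩
      intro S hS hxS hdS
      have hdε : EMetric.diam S < ε := by
        refine lt_of_lt_of_le hdS (le_trans ?_ hn.le)
        exact ENNReal.inv_le_inv.mpr (by simp)
      calc fedQuot μ ζ S
          ≤ ⨆ (S : Set X) (_ : S ∈ goodClass μ 𝒮 ζ) (_ : x ∈ S)
              (_ : EMetric.diam S < ε), fedQuot μ ζ S :=
            le_iSup_of_le S (le_iSup_of_le hS (le_iSup_of_le hxS (le_iSup_of_le hdε le_rfl)))
        _ ≤ (m : ℝ≥0∞) := hm.le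
  refine le_antisymm ?_ zero_le
  calc μ B ≤ μ ({x ∈ A | federerDensity μ 𝒮 ζ x = ⊤} ∪ ⋃ n, ⋃ m, C n m) :=
        measure_mono hcover
    _ ≤ μ {x ∈ A | federerDensity μ 𝒮 ζ x = ⊤} + μ (⋃ n, ⋃ m, C n m) :=
        measure_union_le _ _
    _ = 0 := by
        rw [h, measure_iUnion_null fun n => measure_iUnion_null fun m => hCnull n m]
        simp
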